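/- Let Θ be a nonempty type, V₀ : Θ → ℝ, V : Θ → ℝ^m, c ∈ ℝ^m, L(θ, λ) = V₀(θ) + ∑_{i=1}^m λᵢ (Vᵢ(θ) − cᵢ), and d(λ) = sup_{θ ∈ Θ} L(θ, λ), assumed finite for all λ ≥ 0. Let δ ≥ 0 and θ† : ℝ^m → Θ satisfy d(λ) ≤ L(θ†(λ), λ) + δ for all λ ≥ 0, and suppose ‖V(θ†(λ)) − c‖² ≤ B for all λ ≥ 0. Fix η > 0, let λ* ≥ 0 attain inf_{λ ≥ 0} d(λ), and define the iterates λ₀ = 0, λ_{k+1} = [λ_k − η (V(θ†(λ_k)) − c)]₊, where [·]₊ is the coordinatewise positive part. Then for every ε > 0 there exists K ∈ ℕ with K ≤ ‖λ₀ − λ*‖² / (2ηε) such that d(λ_K) ≤ d(λ*) + ηB/2 + δ + ε. -/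

import Mathlib

private lemma sq_max_sub_le (a b : ℝ) (hb : 0 ≤ b) : (max a 0 - b)^2 ≤ (a - b)^2 := by
  rcases le_or_gt 0 a with h | h
  · rw [max_eq_left h]
  · rw [max_eq_right h.le]; nlinarith

private lemma euclid_norm_sq {m : ℕ} (x : EuclideanSpace ℝ (Fin m)) :
    ‖x‖ ^ 2 = ∑ i, (x i) ^ 2 := by
  rw [EuclideanSpace.norm_eq, Real.sq_sqrt (by positivity)]
  simp [Real.norm_eq_abs, sq_abs]

/-- **Theorem 3 (convergence of Algorithm 1, dualDescent).** The projected
approximate dual (sub)gradient iteration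
`λ_{k+1} = [λ_k − η (V(θ†(λ_k)) − c)]₊` started at `λ₀ = 0` reaches, within at
most `‖λ₀ − λ*‖²/(2ηε)` steps, a multiplier whose dual value is within
`ηB/2 + δ + ε` of the optimal dual value `d(λ*)`. -/
theorem dual_descent_convergence
    {Θ : Type*} [Nonempty Θ] {m : ℕ}
    (V₀ : Θ → ℝ) (V : Θ → Fin m → ℝ) (c : Fin m → ℝ)
    (hbdd : ∀ l : EuclideanSpace ℝ (Fin m), (∀ i, 0 ≤ l i) →
      BddAbove (Set.range fun θ => V₀ θ + ∑ i, l i * (V θ i - c i)))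
    (δ : ℝ) (hδ : 0 ≤ δ)
    (θd : EuclideanSpace ℝ (Fin m) → Θ)
    (happrox : ∀ l : EuclideanSpace ℝ (Fin m), (∀ i, 0 ≤ l i) →
      sSup (Set.range fun θ => V₀ θ + ∑ i, l i * (V θ i - c i)) ≤
        (V₀ (θd l) + ∑ i, l i * (V (θd l) i - c i)) + δ)
    (B : ℝ)
    (hB : ∀ l : EuclideanSpace ℝ (Fin m), (∀ i, 0 ≤ l i) →
      ‖(show EuclideanSpace ℝ (Fin m) from WithLp.toLp 2 fun i => V (θd l) i - c i)‖ ^ 2 ≤ B)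
    (η : ℝ) (hη : 0 < η)
    (lstar : EuclideanSpace ℝ (Fin m)) (hlstar : ∀ i, 0 ≤ lstar i)
    (hlstaropt : sSup (Set.range fun θ => V₀ θ + ∑ i, lstar i * (V θ i - c i)) =
      sInf {y : ℝ | ∃ l : EuclideanSpace ℝ (Fin m), (∀ i, 0 ≤ l i) ∧
        y = sSup (Set.range fun θ => V₀ θ + ∑ i, l i * (V θ i - c i))})
    (lam : ℕ → EuclideanSpace ℝ (Fin m))
    (hlam0 : lam 0 = 0)
    (hstep : ∀ k, ∀ i, lam (k + 1) i =
      max (lam k i - η * (V (θd (lam k)) i - c i)) 0) :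
    ∀ ε : ℝ, 0 < ε → ∃ K : ℕ,
      (K : ℝ) ≤ ‖lam 0 - lstar‖ ^ 2 / (2 * η * ε) ∧
      sSup (Set.range fun θ => V₀ θ + ∑ i, (lam K) i * (V θ i - c i)) ≤
        sSup (Set.range fun θ => V₀ θ + ∑ i, lstar i * (V θ i - c i)) +
          η * B / 2 + δ + ε := by
  intro ε hε
  set d : EuclideanSpace ℝ (Fin m) → ℝ :=
    fun l => sSup (Set.range fun θ => V₀ θ + ∑ i, l i * (V θ i - c i)) with hd
  -- nonnegativity of iterates
  have hpos : ∀ k, ∀ i, 0 ≤ lam k i := by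
    intro k
    induction k with
    | zero => intro i; rw [hlam0]; simp
    | succ n _ => intro i; rw [hstep n i]; exact le_max_right _ _
  -- squared distance to lstar
  set S : ℕ → ℝ := fun k => ∑ i, (lam k i - lstar i) ^ 2 with hS
  have hSnonneg : ∀ k, 0 ≤ S k := fun k => Finset.sum_nonneg fun i _ => sq_nonneg _
  -- one-step descent inequality
  have hkey : ∀ k, S (k + 1) ≤ S k - 2 * η * (d (lam k) - d lstar - δ) + η ^ 2 * B := by
    intro k
    set a := lam k with ha
    set g : Fin m → ℝ := fun i => V (θd a) i - c i with hg
    have h1 : S (k + 1) ≤ ∑ i, (a i - η * g i - lstar i) ^ 2 := by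
      apply Finset.sum_le_sum
      intro i _
      rw [hstep k i]
      exact sq_max_sub_le _ _ (hlstar i)
    have h2 : ∑ i, (a i - η * g i - lstar i) ^ 2 =
        S k - 2 * η * (∑ i, g i * (a i - lstar i)) + η ^ 2 * (∑ i, g i ^ 2) := by
      rw [hS, Finset.mul_sum, Finset.mul_sum, ← Finset.sum_sub_distrib,
        ← Finset.sum_add_distrib]
      exact Finset.sum_congr rfl fun i _ => by ring
    -- subgradient inequality
    have hsub : d a - δ - d lstar ≤ ∑ i, g i * (a i - lstar i) := by
      have hda : d a ≤ V₀ (θd a) + ∑ i, a i * (V (θd a) i - c i) + δ :=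
        happrox a (hpos k)
      have hds : V₀ (θd a) + ∑ i, lstar i * (V (θd a) i - c i) ≤ d lstar :=
        le_csSup (hbdd lstar hlstar) ⟨θd a, rfl⟩
      have hexp : ∑ i, g i * (a i - lstar i) =
          (∑ i, a i * (V (θd a) i - c i)) - ∑ i, lstar i * (V (θd a) i - c i) := by
        rw [← Finset.sum_sub_distrib]
        exact Finset.sum_congr rfl fun i _ => by rw [hg]; ring
      rw [hexp]; linarith
    have hgB : ∑ i, g i ^ 2 ≤ B := by
      have := hB a (hpos k)
      rw [euclid_norm_sq] at this; simpa [hg] using this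
    have hη2 : (0:ℝ) ≤ η ^ 2 := sq_nonneg η
    nlinarith [mul_le_mul_of_nonneg_left hsub (by positivity : (0:ℝ) ≤ 2 * η),
      mul_le_mul_of_nonneg_left hgB hη2]
  -- norm squared equals S
  have hnorm : ∀ k, ‖lam k - lstar‖ ^ 2 = S k := by
    intro k
    rw [euclid_norm_sq]
    exact Finset.sum_congr rfl fun i _ => by simp [PiLp.sub_apply]
  set bound : ℝ := ‖lam 0 - lstar‖ ^ 2 / (2 * η * ε) with hbound
  have hbound0 : 0 ≤ bound := by positivity
  by_contra hcon
  push_neg at hcon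
  have hfail : ∀ K : ℕ, (K : ℝ) ≤ bound →
      d lstar + η * B / 2 + δ + ε < d (lam K) := fun K hK => hcon K hK
  -- iterate the descent inequality
  have hiter : ∀ k : ℕ, (k : ℝ) ≤ bound + 1 → S k ≤ S 0 - 2 * η * ε * k := by
    intro k
    induction k with
    | zero => intro _; simp
    | succ n ih =>
      intro hn
      have hn' : (n : ℝ) ≤ bound := by
        have : ((n : ℝ) + 1) ≤ bound + 1 := by push_cast at hn; linarith
        -- n < n+1 ≤ bound + 1 so n ≤ bound... need n ≤ bound: n + 1 ≤ bound + 1 gives n ≤ bound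
        linarith
      have ihn : S n ≤ S 0 - 2 * η * ε * n := ih (by linarith)
      have hf := hfail n hn'
      have hk := hkey n
      have : -2 * η * (d (lam n) - d lstar - δ) + η ^ 2 * B ≤ -(2 * η * ε) := by
        nlinarith [mul_le_mul_of_nonneg_left hf.le (by positivity : (0:ℝ) ≤ 2 * η)]
      push_cast
      linarith
  -- choose K₀ just beyond the bound
  set K₀ : ℕ := Nat.floor bound + 1 with hK₀
  have hK₀gt : bound < (K₀ : ℝ) := by
    rw [hK₀]; push_cast; exact Nat.lt_floor_add_one bound
  have hK₀le : (K₀ : ℝ) ≤ bound + 1 := by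
    rw [hK₀]; push_cast
    have := Nat.floor_le hbound0
    linarith
  have hfin := hiter K₀ hK₀le
  have hS0 : S 0 = 2 * η * ε * bound := by
    rw [hbound, hnorm 0]
    field_simp
  have h2ηε : 0 < 2 * η * ε := by positivity
  have : S 0 - 2 * η * ε * K₀ < 0 := by
    have := mul_lt_mul_of_pos_left hK₀gt h2ηε
    linarith [hS0]
  linarith [hSnonneg K₀]
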